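/- Let G be a finite group, N a characteristic subgroup, α an automorphism of G with induced automorphism α̃ of G/N. Then L₃(α) ≤ [N : fix(α|_N)] · L₋₁(N) · L₃(α̃), where L₃(β) is the number of elements cubed by β, L₋₁(N) is the maximum over automorphisms γ of N of the number of elements of N inverted by γ, and fix(α|_N) is the fixed-point subgroup of α restricted to N. -/

import Mathlib

private lemma fiber_count {A B : Type*} [Finite A] [Finite B] (f : A → B) (M : ℕ)
    (h : ∀ b : B, Nat.card {a : A // f a = b} ≤ M) :
    Nat.card A ≤ Nat.card B * M := by
  classical
  have : Fintype A := Fintype.ofFinite A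
  have : Fintype B := Fintype.ofFinite B
  rw [Nat.card_eq_fintype_card, Nat.card_eq_fintype_card]
  calc Fintype.card A = Fintype.card ((b : B) × {a : A // f a = b}) :=
        (Fintype.card_congr (Equiv.sigmaFiberEquiv f)).symm
    _ = ∑ b : B, Fintype.card {a : A // f a = b} := Fintype.card_sigma
    _ ≤ ∑ _b : B, M := Finset.sum_le_sum (fun b _ => by
        rw [← Nat.card_eq_fintype_card]; exact h b)
    _ = Fintype.card B * M := by simp [Finset.sum_const, mul_comm]

/-- If `α̃` is the automorphism of `G ⧸ N` induced by `α` (N characteristic), then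
`L₃(α) ≤ [N : fix(α|_N)] · L₋₁(N) · L₃(α̃)`, where `L₋₁(N)` is the maximum number of
elements of `N` inverted by an automorphism of `N`. -/
theorem stmt_6 {G : Type*} [Group G] [Finite G] (N : Subgroup G) [N.Characteristic]
    (α : G ≃* G) (αbar : (G ⧸ N) ≃* (G ⧸ N))
    (hbar : ∀ g : G, αbar (g : G ⧸ N) = ((α g : G) : G ⧸ N)) :
    Nat.card {x : G | α x = x ^ 3} ≤
      ((α.toMonoidHom.eqLocus (MonoidHom.id G)).relIndex N) *
        (⨆ γ : (↥N ≃* ↥N), Nat.card {n : ↥N | γ n = n⁻¹}) *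
          Nat.card {y : G ⧸ N | αbar y = y ^ 3} := by
  classical
  set fixN : Subgroup ↥N := (α.toMonoidHom.eqLocus (MonoidHom.id G)).subgroupOf N with hfixN
  set L : ℕ := ⨆ γ : (↥N ≃* ↥N), Nat.card {n : ↥N | γ n = n⁻¹} with hlL
  have hLbdd : BddAbove (Set.range fun γ : (↥N ≃* ↥N) => Nat.card {n : ↥N | γ n = n⁻¹}) := by
    refine ⟨Nat.card ↥N, ?_⟩
    rintro _ ⟨γ, rfl⟩
    exact Nat.card_le_card_of_injective (Subtype.val) Subtype.val_injective
  -- key group-theoretic fact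
  have key : ∀ x₁ x₂ : G, α x₁ = x₁ ^ 3 → α x₂ = x₂ ^ 3 → α (x₁⁻¹ * x₂) = x₁⁻¹ * x₂ →
      x₁ * x₁ = x₂ * x₂ := by
    intro x₁ x₂ h1 h2 hc
    have e : (x₁ ^ 3)⁻¹ * x₂ ^ 3 = x₁⁻¹ * x₂ := by
      rw [← h1, ← h2, ← map_inv, ← map_mul]; exact hc
    calc x₁ * x₁ = x₁ ^ 3 * (x₁⁻¹ * x₂) * x₂⁻¹ := by rw [← pow_two]; group
      _ = x₁ ^ 3 * ((x₁ ^ 3)⁻¹ * x₂ ^ 3) * x₂⁻¹ := by rw [e]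
      _ = x₂ * x₂ := by rw [← pow_two]; group
  -- the projection to the quotient
  have hmem3 : ∀ x : G, α x = x ^ 3 → αbar (x : G ⧸ N) = (x : G ⧸ N) ^ 3 := by
    intro x hx
    rw [hbar, hx]
    simp
  let f : {x : G | α x = x ^ 3} → {y : G ⧸ N | αbar y = y ^ 3} :=
    fun x => ⟨((x : G) : G ⧸ N), hmem3 x x.2⟩
  have main : ∀ y, Nat.card {x : {x : G | α x = x ^ 3} // f x = y} ≤ fixN.index * L := by
    intro y
    by_cases hne : Nonempty {x : {x : G | α x = x ^ 3} // f x = y}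
    · obtain ⟨x₀⟩ := hne
      have hmemN : ∀ x : {x : {x : G | α x = x ^ 3} // f x = y},
          (x₀.1.1)⁻¹ * x.1.1 ∈ N := fun x =>
        QuotientGroup.eq.mp (congrArg Subtype.val (x₀.2.trans x.2.symm))
      let ψ : {x : {x : G | α x = x ^ 3} // f x = y} → (↥N ⧸ fixN) :=
        fun x => QuotientGroup.mk ⟨x₀.1.1⁻¹ * x.1.1, hmemN x⟩
      have step : ∀ q : ↥N ⧸ fixN,
          Nat.card {x : {x : {x : G | α x = x ^ 3} // f x = y} // ψ x = q} ≤ L := by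
        intro q
        by_cases hq : Nonempty {x : {x : {x : G | α x = x ^ 3} // f x = y} // ψ x = q}
        · obtain ⟨x₂⟩ := hq
          set g₂ : G := x₂.1.1.1 with hg₂
          have hg₂3 : α g₂ = g₂ ^ 3 := x₂.1.1.2
          let γ : ↥N ≃* ↥N := MulAut.conjNormal g₂⁻¹
          have hzmem : ∀ x : {x : {x : {x : G | α x = x ^ 3} // f x = y} // ψ x = q},
              g₂⁻¹ * x.1.1.1 ∈ N := by
            intro x
            have h1 := hmemN x.1
            have h2 := hmemN x₂.1
            have h3 := mul_mem (inv_mem h2) h1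
            rw [hg₂]
            simpa [mul_assoc] using h3
          have hkey : ∀ x : {x : {x : {x : G | α x = x ^ 3} // f x = y} // ψ x = q},
              x.1.1.1 * x.1.1.1 = g₂ * g₂ := by
            intro x
            have hψ : ψ x.1 = ψ x₂.1 := x.2.trans x₂.2.symm
            have hfx := QuotientGroup.eq.mp hψ
            rw [Subgroup.mem_subgroupOf] at hfx
            have hfx2 : α ((x₀.1.1⁻¹ * x.1.1.1)⁻¹ * (x₀.1.1⁻¹ * g₂)) =
                (x₀.1.1⁻¹ * x.1.1.1)⁻¹ * (x₀.1.1⁻¹ * g₂) := hfx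
            simp only [mul_inv_rev, inv_inv, mul_assoc, mul_inv_cancel_left] at hfx2
            exact key x.1.1.1 g₂ x.1.1.2 hg₂3 (by simpa [mul_assoc] using hfx2)
          let Φ : {x : {x : {x : G | α x = x ^ 3} // f x = y} // ψ x = q} →
              {n : ↥N | γ n = n⁻¹} := fun x =>
            ⟨⟨g₂⁻¹ * x.1.1.1, hzmem x⟩, by
              have hsq := hkey x
              show γ ⟨g₂⁻¹ * x.1.1.1, hzmem x⟩ = (⟨g₂⁻¹ * x.1.1.1, hzmem x⟩ : ↥N)⁻¹
              apply Subtype.ext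
              rw [MulAut.conjNormal_apply]
              show g₂⁻¹ * (g₂⁻¹ * x.1.1.1) * (g₂⁻¹)⁻¹ = (g₂⁻¹ * x.1.1.1)⁻¹
              calc g₂⁻¹ * (g₂⁻¹ * x.1.1.1) * (g₂⁻¹)⁻¹
                  = (g₂ * g₂)⁻¹ * x.1.1.1 * g₂ := by group
                _ = (x.1.1.1 * x.1.1.1)⁻¹ * x.1.1.1 * g₂ := by rw [hsq]
                _ = (g₂⁻¹ * x.1.1.1)⁻¹ := by group⟩
          have hΦinj : Function.Injective Φ := by
            intro a b hab
            have h : g₂⁻¹ * a.1.1.1 = g₂⁻¹ * b.1.1.1 :=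
              congrArg (fun n => n.1.1) hab
            have h' := mul_left_cancel h
            exact Subtype.ext (Subtype.ext (Subtype.ext h'))
          calc Nat.card {x : {x : {x : G | α x = x ^ 3} // f x = y} // ψ x = q}
              ≤ Nat.card {n : ↥N | γ n = n⁻¹} := Nat.card_le_card_of_injective Φ hΦinj
            _ ≤ L := le_ciSup hLbdd γ
        · rw [not_nonempty_iff] at hq
          rw [Nat.card_of_isEmpty]
          exact Nat.zero_le _
      have hfc := fiber_count ψ L step
      calc Nat.card {x : {x : G | α x = x ^ 3} // f x = y}
          ≤ Nat.card (↥N ⧸ fixN) * L := hfc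
        _ = fixN.index * L := rfl
    · rw [not_nonempty_iff] at hne
      rw [Nat.card_of_isEmpty]
      exact Nat.zero_le _
  have hfc := fiber_count f (fixN.index * L) main
  calc Nat.card {x : G | α x = x ^ 3}
      ≤ Nat.card {y : G ⧸ N | αbar y = y ^ 3} * (fixN.index * L) := hfc
    _ = ((α.toMonoidHom.eqLocus (MonoidHom.id G)).relIndex N) * L *
        Nat.card {y : G ⧸ N | αbar y = y ^ 3} := by
      rw [Subgroup.relIndex]; ring
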